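/- Main theorem: Let Ê be a sublinear expectation on H, and let X, Y ∈ H be one-dimensional random variables such that X has distributional uncertainty, Y is not constant, the distribution of Y admits a representation Ê[ψ(Y)] = max_{P∈P} E_P[ψ] over a family P of Borel probability measures on ℝ where the max is attained, X is independent from Y, and Y is independent from X. Then Y is maximally distributed: there exists a closed set Γ ⊆ ℝ such that Ê[ψ(Y)] = sup_{y∈Γ} ψ(y) for all bounded Lipschitz ψ: ℝ → ℝ. -/

import Mathlib

open MeasureTheory

structure SLE (Ω : Type*) where
  H : Submodule ℝ (Ω → ℝ)
  E : (Ω → ℝ) → ℝ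
  const_mem : ∀ c : ℝ, (fun _ => c) ∈ H
  mono : ∀ f g, f ∈ H → g ∈ H → (∀ ω, f ω ≤ g ω) → E f ≤ E g
  const : ∀ c : ℝ, E (fun _ => c) = c
  subadd : ∀ f g, f ∈ H → g ∈ H → E (f + g) ≤ E f + E g
  poshom : ∀ f, f ∈ H → ∀ l : ℝ, 0 ≤ l → E (l • f) = l * E f

def BLip (φ : ℝ → ℝ) : Prop :=
  (∃ K, LipschitzWith K φ) ∧ ∃ C, ∀ x, |φ x| ≤ C

def BLip2 (φ : ℝ → ℝ → ℝ) : Prop :=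
  (∃ K, LipschitzWith K (fun p : ℝ × ℝ => φ p.1 p.2)) ∧ ∃ C, ∀ x y, |φ x y| ≤ C

lemma blip_of_bounds (φ : ℝ → ℝ) (M C : ℝ)
    (hL : ∀ x y, |φ x - φ y| ≤ M * |x - y|) (hC : ∀ x, |φ x| ≤ C) : BLip φ := by
  refine ⟨⟨M.toNNReal, LipschitzWith.of_dist_le_mul fun x y => ?_⟩, C, hC⟩
  rw [Real.dist_eq, Real.dist_eq]
  calc |φ x - φ y| ≤ M * |x - y| := hL x y
    _ ≤ M.toNNReal * |x - y| := by
        apply mul_le_mul_of_nonneg_right _ (abs_nonneg _)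
        rw [Real.coe_toNNReal']; exact le_max_left _ _

lemma blip_bounds (φ : ℝ → ℝ) (h : BLip φ) :
    ∃ M C : ℝ, 0 ≤ M ∧ 0 ≤ C ∧ (∀ x y, |φ x - φ y| ≤ M * |x - y|) ∧ ∀ x, |φ x| ≤ C := by
  obtain ⟨⟨K, hK⟩, C, hC⟩ := h
  refine ⟨K, C, K.coe_nonneg, le_trans (abs_nonneg _) (hC 0), fun x y => ?_, hC⟩
  have := hK.dist_le_mul x y
  rwa [Real.dist_eq, Real.dist_eq] at this

lemma blip2_of_bounds (φ : ℝ → ℝ → ℝ) (M C : ℝ)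
    (hL : ∀ x y x' y', |φ x y - φ x' y'| ≤ M * max |x - x'| |y - y'|)
    (hC : ∀ x y, |φ x y| ≤ C) : BLip2 φ := by
  refine ⟨⟨M.toNNReal, LipschitzWith.of_dist_le_mul fun p q => ?_⟩, C, fun x y => hC x y⟩
  rw [Prod.dist_eq, Real.dist_eq, Real.dist_eq, Real.dist_eq]
  calc |φ p.1 p.2 - φ q.1 q.2| ≤ M * max |p.1 - q.1| |p.2 - q.2| := hL _ _ _ _
    _ ≤ M.toNNReal * max |p.1 - q.1| |p.2 - q.2| := by
        apply mul_le_mul_of_nonneg_right _ (le_max_iff.2 (Or.inl (abs_nonneg _)))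
        rw [Real.coe_toNNReal']; exact le_max_left _ _

lemma blip_continuous (φ : ℝ → ℝ) (h : BLip φ) : Continuous φ := by
  obtain ⟨⟨K, hK⟩, _⟩ := h; exact hK.continuous

lemma blip_clip (ψ : ℝ → ℝ) (h : BLip ψ) (t : ℝ) (ht0 : 0 ≤ t) (ht1 : t ≤ 1) :
    BLip (fun y => max (ψ y) (t * ψ y)) := by
  obtain ⟨M, C, hM0, hC0, hML, hCb⟩ := blip_bounds ψ h
  apply blip_of_bounds _ M C
  · intro x y
    calc |max (ψ x) (t * ψ x) - max (ψ y) (t * ψ y)|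
        ≤ max |ψ x - ψ y| |t * ψ x - t * ψ y| := abs_max_sub_max_le_max _ _ _ _
      _ ≤ M * |x - y| := by
          apply max_le (hML x y)
          have : |t * ψ x - t * ψ y| = t * |ψ x - ψ y| := by
            rw [← mul_sub, abs_mul, abs_of_nonneg ht0]
          rw [this]
          nlinarith [hML x y, abs_nonneg (ψ x - ψ y)]
  · intro x
    calc |max (ψ x) (t * ψ x)| ≤ max |ψ x| |t * ψ x| := abs_max_le_max_abs_abs
      _ ≤ C := by
          apply max_le (hCb x)
          rw [abs_mul, abs_of_nonneg ht0]
          nlinarith [hCb x, abs_nonneg (ψ x)]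

lemma blip_pos_part (ψ : ℝ → ℝ) (h : BLip ψ) : BLip (fun y => max (ψ y) 0) := by
  have := blip_clip ψ h 0 le_rfl zero_le_one
  simpa using this

lemma blip_sub_const (ψ : ℝ → ℝ) (h : BLip ψ) (c : ℝ) : BLip (fun y => ψ y - c) := by
  obtain ⟨M, C, hM0, hC0, hML, hCb⟩ := blip_bounds ψ h
  apply blip_of_bounds _ M (C + |c|)
  · intro x y; simpa using hML x y
  · intro x
    calc |ψ x - c| ≤ |ψ x| + |c| := abs_sub _ _
      _ ≤ C + |c| := by linarith [hCb x]

lemma sle_add_const {Ω : Type*} (S : SLE Ω) (f : Ω → ℝ) (hf : f ∈ S.H) (c : ℝ) :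
    S.E (fun ω => f ω + c) = S.E f + c := by
  have hfc : (fun ω => f ω + c) ∈ S.H := S.H.add_mem hf (S.const_mem c)
  apply le_antisymm
  · have h := S.subadd f (fun _ => c) hf (S.const_mem c)
    rw [S.const] at h
    exact h
  · have h := S.subadd (fun ω => f ω + c) (fun _ => -c) hfc (S.const_mem (-c))
    rw [S.const] at h
    have h2 : S.E ((fun ω => f ω + c) + fun _ => -c) = S.E f := by
      congr 1; funext ω; simp
    rw [h2] at h; linarith

lemma sle_smul {Ω : Type*} (S : SLE Ω) (f : Ω → ℝ) (hf : f ∈ S.H) (l : ℝ) (hl : 0 ≤ l) :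
    S.E (fun ω => l * f ω) = l * S.E f := S.poshom f hf l hl

lemma sle_affine_comp {Ω : Type*} (S : SLE Ω) (g : Ω → ℝ) (hg : g ∈ S.H) (r s : ℝ) (hr : 0 ≤ r) :
    S.E (fun ω => r * (g ω + s)) = r * (S.E g + s) := by
  rw [sle_smul S (fun ω => g ω + s) (S.H.add_mem hg (S.const_mem s)) r hr,
    sle_add_const S g hg s]

lemma sle_le_add {Ω : Type*} (S : SLE Ω) (f g : Ω → ℝ) (hf : f ∈ S.H) (hg : g ∈ S.H) (δ : ℝ)
    (h : ∀ ω, f ω ≤ g ω + δ) : S.E f ≤ S.E g + δ := by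
  have hgδ : (fun ω => g ω + δ) ∈ S.H := S.H.add_mem hg (S.const_mem δ)
  have := S.mono f (fun ω => g ω + δ) hf hgδ h
  rwa [sle_add_const S g hg δ] at this

lemma sle_abs_le {Ω : Type*} (S : SLE Ω) (f g : Ω → ℝ) (hf : f ∈ S.H) (hg : g ∈ S.H) (δ : ℝ)
    (h : ∀ ω, |f ω - g ω| ≤ δ) : |S.E f - S.E g| ≤ δ := by
  have h1 := sle_le_add S f g hf hg δ (fun ω => by have := abs_le.1 (h ω); linarith [this.2])
  have h2 := sle_le_add S g f hg hf δ (fun ω => by have := abs_le.1 (h ω); linarith [this.1])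
  rw [abs_le]; constructor <;> linarith

lemma integrable_of_blip (ψ : ℝ → ℝ) (h : BLip ψ) (P : Measure ℝ) [IsProbabilityMeasure P] :
    Integrable ψ P := by
  obtain ⟨⟨K, hK⟩, C, hC⟩ := h
  exact (integrable_const C).mono' hK.continuous.aestronglyMeasurable
    (Filter.Eventually.of_forall fun x => by simpa [Real.norm_eq_abs] using hC x)


lemma ptwise_max (ε : ℝ) (hε0 : 0 ≤ ε) (hε1 : ε ≤ 1) (n : ℕ) (t : ℝ) :
    max (max t (ε ^ n * t)) (ε * max t (ε ^ n * t)) = max t (ε ^ (n + 1) * t) := by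
  have hεn1 : ε ^ n ≤ 1 := pow_le_one₀ hε0 hε1
  have hεn0 : 0 ≤ ε ^ n := pow_nonneg hε0 n
  have hεn1' : ε ^ (n + 1) ≤ 1 := pow_le_one₀ hε0 hε1
  have hεn0' : 0 ≤ ε ^ (n + 1) := pow_nonneg hε0 (n + 1)
  have hpow : ε * ε ^ n = ε ^ (n + 1) := by ring
  rcases le_or_gt 0 t with ht | ht
  · have hin : max t (ε ^ n * t) = t := max_eq_left (by nlinarith)
    rw [hin, max_eq_left (by nlinarith), max_eq_left (by nlinarith)]
  · have htn : ε ^ n * t ≤ 0 := mul_nonpos_of_nonneg_of_nonpos hεn0 ht.le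
    have hin : max t (ε ^ n * t) = ε ^ n * t := max_eq_right (by nlinarith)
    rw [hin, max_eq_right (show ε ^ n * t ≤ ε * (ε ^ n * t) by nlinarith),
      show ε * (ε ^ n * t) = ε ^ (n + 1) * t by ring,
      max_eq_right (show t ≤ ε ^ (n + 1) * t by nlinarith)]

lemma blip2_prod (φ ψ : ℝ → ℝ) (hφ : BLip φ) (hψ : BLip ψ) :
    BLip2 (fun x y => φ x * ψ y) := by
  obtain ⟨Mψ, Cψ, hMψ0, hCψ0, hMψ, hCψ⟩ := blip_bounds ψ hψ
  obtain ⟨Mφ, Cφ, hMφ0, hCφ0, hMφ, hCφ⟩ := blip_bounds φ hφ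
  apply blip2_of_bounds _ (Cφ * Mψ + Cψ * Mφ) (Cφ * Cψ)
  · intro x y x' y'
    set d := max |x - x'| |y - y'| with hd
    have hdx : |x - x'| ≤ d := le_max_left _ _
    have hdy : |y - y'| ≤ d := le_max_right _ _
    have hd0 : 0 ≤ d := le_trans (abs_nonneg _) hdx
    have h1 : |ψ y - ψ y'| ≤ Mψ * d :=
      le_trans (hMψ y y') (mul_le_mul_of_nonneg_left hdy hMψ0)
    have h2 : |φ x - φ x'| ≤ Mφ * d :=
      le_trans (hMφ x x') (mul_le_mul_of_nonneg_left hdx hMφ0)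
    have t1 : |φ x| * |ψ y - ψ y'| ≤ Cφ * (Mψ * d) :=
      mul_le_mul (hCφ x) h1 (abs_nonneg _) hCφ0
    have t2 : |ψ y'| * |φ x - φ x'| ≤ Cψ * (Mφ * d) :=
      mul_le_mul (hCψ y') h2 (abs_nonneg _) hCψ0
    have e : φ x * ψ y - φ x' * ψ y' = φ x * (ψ y - ψ y') + ψ y' * (φ x - φ x') := by ring
    calc |φ x * ψ y - φ x' * ψ y'|
        ≤ |φ x * (ψ y - ψ y')| + |ψ y' * (φ x - φ x')| := by rw [e]; exact abs_add_le _ _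
      _ = |φ x| * |ψ y - ψ y'| + |ψ y'| * |φ x - φ x'| := by rw [abs_mul, abs_mul]
      _ ≤ (Cφ * Mψ + Cψ * Mφ) * d := by
          have : (Cφ * Mψ + Cψ * Mφ) * d = Cφ * (Mψ * d) + Cψ * (Mφ * d) := by ring
          linarith
  · intro x y
    rw [abs_mul]
    exact mul_le_mul (hCφ x) (hCψ y) (abs_nonneg _) hCφ0

lemma exists_phistar {Ω : Type*} (S : SLE Ω) (X : Ω → ℝ)
    (hcompX : ∀ φ : ℝ → ℝ, BLip φ → (fun ω => φ (X ω)) ∈ S.H)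
    (ψ : ℝ → ℝ) (hψ : BLip ψ)
    (hgt : 0 < S.E (fun ω => ψ (X ω)) + S.E (fun ω => -ψ (X ω))) :
    ∃ (φs : ℝ → ℝ) (ε : ℝ), 0 ≤ ε ∧ ε < 1 ∧ (∀ x, 0 ≤ φs x) ∧ BLip φs ∧
      S.E (fun ω => φs (X ω)) = 1 ∧ S.E (fun ω => -(φs (X ω))) = -ε := by
  obtain ⟨M, C, hM0, hC0, hML, hCb⟩ := blip_bounds ψ hψ
  have hf : (fun ω => ψ (X ω)) ∈ S.H := hcompX ψ hψ
  have hnf : (fun ω => -ψ (X ω)) ∈ S.H := S.H.neg_mem hf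
  obtain ⟨na, hna⟩ : ∃ na, S.E (fun ω => ψ (X ω)) = na := ⟨_, rfl⟩
  obtain ⟨nb, hnb⟩ : ∃ nb, S.E (fun ω => -ψ (X ω)) = nb := ⟨_, rfl⟩
  rw [hna, hnb] at hgt
  have hnbC : nb ≤ C := by
    rw [← hnb]
    have h := S.mono (fun ω => -ψ (X ω)) (fun _ => C) hnf (S.const_mem C)
      (fun ω => by
        have h2 := abs_le.1 (hCb (X ω))
        show -ψ (X ω) ≤ C
        linarith [h2.1])
    rwa [S.const] at h
  have haC : 0 < na + C := by linarith
  have hr0 : 0 < (na + C)⁻¹ := inv_pos.2 haC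
  refine ⟨fun x => (na + C)⁻¹ * (ψ x + C), (na + C)⁻¹ * (C - nb), ?_, ?_, ?_, ?_, ?_, ?_⟩
  · exact mul_nonneg hr0.le (by linarith)
  · rw [inv_mul_lt_iff₀ haC]; nlinarith
  · intro x
    have h2 := abs_le.1 (hCb x)
    exact mul_nonneg hr0.le (by linarith [h2.1])
  · apply blip_of_bounds _ ((na + C)⁻¹ * M) ((na + C)⁻¹ * (2 * C))
    · intro x y
      have e : (na + C)⁻¹ * (ψ x + C) - (na + C)⁻¹ * (ψ y + C)
          = (na + C)⁻¹ * (ψ x - ψ y) := by ring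
      rw [e, abs_mul, abs_of_pos hr0, mul_assoc]
      exact mul_le_mul_of_nonneg_left (hML x y) hr0.le
    · intro x
      rw [abs_mul, abs_of_pos hr0]
      apply mul_le_mul_of_nonneg_left _ hr0.le
      have h2 := abs_le.1 (hCb x)
      rw [abs_le]; constructor <;> linarith [h2.1, h2.2]
  · rw [sle_affine_comp S _ hf _ C hr0.le, hna, inv_mul_cancel₀ haC.ne']
  · have e : (fun ω => -((na + C)⁻¹ * (ψ (X ω) + C)))
        = fun ω => (na + C)⁻¹ * (-ψ (X ω) + -C) := by
      funext ω; ring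
    rw [e, sle_affine_comp S _ hnf _ (-C) hr0.le, hnb]
    ring

theorem stmt18 {Ω : Type*} (S : SLE Ω) (X Y : Ω → ℝ) (hX : X ∈ S.H) (hY : Y ∈ S.H)
    (hmemXY : ∀ φ : ℝ → ℝ → ℝ, BLip2 φ → (fun ω => φ (X ω) (Y ω)) ∈ S.H)
    (hcompX : ∀ φ : ℝ → ℝ, BLip φ → (fun ω => φ (X ω)) ∈ S.H)
    (hcompY : ∀ φ : ℝ → ℝ, BLip φ → (fun ω => φ (Y ω)) ∈ S.H)
    (hunc : ¬ ∀ ψ₁ ψ₂, BLip ψ₁ → BLip ψ₂ →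
      S.E (fun ω => ψ₁ (X ω) + ψ₂ (X ω)) = S.E (fun ω => ψ₁ (X ω)) + S.E (fun ω => ψ₂ (X ω)))
    (hYnc : ∃ ω₁ ω₂, Y ω₁ ≠ Y ω₂)
    (Ps : Set (Measure ℝ)) (hPs : Ps.Nonempty)
    (hprob : ∀ P ∈ Ps, IsProbabilityMeasure P)
    (hub : ∀ ψ, BLip ψ → ∀ P ∈ Ps, ∫ y, ψ y ∂P ≤ S.E (fun ω => ψ (Y ω)))
    (hatt : ∀ ψ, BLip ψ → ∃ P ∈ Ps, ∫ y, ψ y ∂P = S.E (fun ω => ψ (Y ω)))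
    (hYindX : ∀ φ : ℝ → ℝ → ℝ, BLip2 φ →
      S.E (fun ω => φ (X ω) (Y ω)) = S.E (fun ω => S.E (fun ω' => φ (X ω) (Y ω'))))
    (hXindY : ∀ φ : ℝ → ℝ → ℝ, BLip2 φ →
      S.E (fun ω => φ (X ω) (Y ω)) = S.E (fun ω => S.E (fun ω' => φ (X ω') (Y ω)))) :
    ∃ Γ : Set ℝ, IsClosed Γ ∧ Γ.Nonempty ∧
      ∀ ψ, BLip ψ → S.E (fun ω => ψ (Y ω)) = sSup (ψ '' Γ) := by
  classical
  -- Step 0: extract a function with distributional uncertainty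
  push_neg at hunc
  obtain ⟨ψ₁, ψ₂, hψ₁, hψ₂, hne⟩ := hunc
  have hf1 : (fun ω => ψ₁ (X ω)) ∈ S.H := hcompX ψ₁ hψ₁
  have hf2 : (fun ω => ψ₂ (X ω)) ∈ S.H := hcompX ψ₂ hψ₂
  have hsum_mem : (fun ω => ψ₁ (X ω) + ψ₂ (X ω)) ∈ S.H := S.H.add_mem hf1 hf2
  have hneg2 : (fun ω => -ψ₂ (X ω)) ∈ S.H := S.H.neg_mem hf2
  have hle : S.E (fun ω => ψ₁ (X ω) + ψ₂ (X ω))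
      ≤ S.E (fun ω => ψ₁ (X ω)) + S.E (fun ω => ψ₂ (X ω)) := S.subadd _ _ hf1 hf2
  have hlt : S.E (fun ω => ψ₁ (X ω) + ψ₂ (X ω))
      < S.E (fun ω => ψ₁ (X ω)) + S.E (fun ω => ψ₂ (X ω)) := lt_of_le_of_ne hle hne
  have hsplit : S.E (fun ω => ψ₁ (X ω))
      ≤ S.E (fun ω => ψ₁ (X ω) + ψ₂ (X ω)) + S.E (fun ω => -ψ₂ (X ω)) := by
    have h := S.subadd (fun ω => ψ₁ (X ω) + ψ₂ (X ω)) (fun ω => -ψ₂ (X ω)) hsum_mem hneg2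
    have heq : ((fun ω => ψ₁ (X ω) + ψ₂ (X ω)) + fun ω => -ψ₂ (X ω))
        = fun ω => ψ₁ (X ω) := by funext ω; simp
    rwa [heq] at h
  have hgt : 0 < S.E (fun ω => ψ₂ (X ω)) + S.E (fun ω => -ψ₂ (X ω)) := by linarith
  obtain ⟨φs, ε, hε0, hε1, hφs0, hφsb, hE1, hE2⟩ := exists_phistar S X hcompX ψ₂ hψ₂ hgt
  have hmemφs : (fun ω => φs (X ω)) ∈ S.H := hcompX φs hφsb
  have hmemnφs : (fun ω => -(φs (X ω))) ∈ S.H := S.H.neg_mem hmemφs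
  -- E[q * φs(X)] = max q (ε q)
  have Econst : ∀ q : ℝ, S.E (fun ω => q * φs (X ω)) = max q (ε * q) := by
    intro q
    rcases le_or_gt 0 q with hq | hq
    · rw [sle_smul S _ hmemφs q hq, hE1, mul_one]
      symm; apply max_eq_left; nlinarith
    · have e : (fun ω => q * φs (X ω)) = fun ω => (-q) * (-(φs (X ω))) := by
        funext ω; ring
      rw [e, sle_smul S _ hmemnφs (-q) (by linarith), hE2]
      have e2 : -q * -ε = ε * q := by ring
      rw [e2]; symm; apply max_eq_right; nlinarith
  -- key identity: E[G(ψ(Y))] = G(E[ψ(Y)]) with G t = max t (ε t)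
  have key : ∀ ψ : ℝ → ℝ, BLip ψ →
      S.E (fun ω => max (ψ (Y ω)) (ε * ψ (Y ω)))
        = max (S.E (fun ω => ψ (Y ω))) (ε * S.E (fun ω => ψ (Y ω))) := by
    intro ψ hψ
    have hb2 : BLip2 (fun x y => φs x * ψ y) := blip2_prod φs ψ hφsb hψ
    have main := (hYindX _ hb2).symm.trans (hXindY _ hb2)
    have lhs : S.E (fun ω => S.E (fun ω' => φs (X ω) * ψ (Y ω')))
        = max (S.E (fun ω => ψ (Y ω))) (ε * S.E (fun ω => ψ (Y ω))) := by
      have e : (fun ω => S.E (fun ω' => φs (X ω) * ψ (Y ω')))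
          = fun ω => S.E (fun ω' => ψ (Y ω')) * φs (X ω) := by
        funext ω
        exact (sle_smul S (fun ω' => ψ (Y ω')) (hcompY ψ hψ) (φs (X ω))
          (hφs0 (X ω))).trans (mul_comm _ _)
      rw [e, Econst]
    have rhs : (fun ω => S.E (fun ω' => φs (X ω') * ψ (Y ω)))
        = fun ω => max (ψ (Y ω)) (ε * ψ (Y ω)) := by
      funext ω
      have e : (fun ω' => φs (X ω') * ψ (Y ω)) = fun ω' => ψ (Y ω) * φs (X ω') := by
        funext ω'; ring
      rw [e, Econst]
    rw [rhs] at main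
    rw [← main, lhs]
  -- iteration and limit: E[(ψ(Y))⁺] = 0 when E[ψ(Y)] = 0
  have posPart : ∀ ψ : ℝ → ℝ, BLip ψ → S.E (fun ω => ψ (Y ω)) = 0 →
      S.E (fun ω => max (ψ (Y ω)) 0) = 0 := by
    intro ψ hψ hc0
    obtain ⟨Mψ, Cψ, hMψ0, hCψ0, hMψ, hCψ⟩ := blip_bounds ψ hψ
    have iter : ∀ n : ℕ, S.E (fun ω => max (ψ (Y ω)) (ε ^ n * ψ (Y ω))) = 0 := by
      intro n; induction n with
      | zero => simpa using hc0
      | succ n ih =>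
        have hψn : BLip (fun y => max (ψ y) (ε ^ n * ψ y)) :=
          blip_clip ψ hψ (ε ^ n) (pow_nonneg hε0 n) (pow_le_one₀ hε0 hε1.le)
        have h := key _ hψn
        try simp only [] at h
        rw [ih] at h
        simp only [mul_zero, max_self] at h
        have e : (fun ω => max (max (ψ (Y ω)) (ε ^ n * ψ (Y ω)))
            (ε * max (ψ (Y ω)) (ε ^ n * ψ (Y ω))))
            = fun ω => max (ψ (Y ω)) (ε ^ (n + 1) * ψ (Y ω)) := by
          funext ω; exact ptwise_max ε hε0 hε1.le n (ψ (Y ω))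
        rwa [e] at h
    have hmem0 : (fun ω => max (ψ (Y ω)) 0) ∈ S.H := hcompY _ (blip_pos_part ψ hψ)
    by_contra hne0
    have habs : 0 < |S.E (fun ω => max (ψ (Y ω)) 0)| := abs_pos.2 hne0
    obtain ⟨n, hn⟩ := exists_pow_lt_of_lt_one
      (show (0:ℝ) < |S.E (fun ω => max (ψ (Y ω)) 0)| / (Cψ + 1) by positivity) hε1
    have hεn0 : (0:ℝ) ≤ ε ^ n := pow_nonneg hε0 n
    have hlimn : |S.E (fun ω => max (ψ (Y ω)) 0)
        - S.E (fun ω => max (ψ (Y ω)) (ε ^ n * ψ (Y ω)))| ≤ Cψ * ε ^ n := by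
      apply sle_abs_le S _ _ hmem0
        (hcompY _ (blip_clip ψ hψ (ε ^ n) (pow_nonneg hε0 n) (pow_le_one₀ hε0 hε1.le)))
      intro ω
      have hCt := abs_le.1 (hCψ (Y ω))
      rcases le_or_gt 0 (ψ (Y ω)) with ht | ht
      · rw [max_eq_left ht, max_eq_left (by nlinarith [pow_le_one₀ hε0 hε1.le (n := n)])]
        simp; positivity
      · rw [max_eq_right ht.le, max_eq_right (by nlinarith [pow_le_one₀ hε0 hε1.le (n := n)])]
        rw [zero_sub, abs_neg, abs_mul, abs_of_nonneg hεn0]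
        nlinarith [abs_nonneg (ψ (Y ω)), hCψ (Y ω)]
    rw [iter n, sub_zero] at hlimn
    rw [lt_div_iff₀ (show (0:ℝ) < Cψ + 1 by positivity)] at hn
    nlinarith [hεn0]
  -- excess: E[(ψ(Y) - E[ψ(Y)])⁺] = 0
  have excess : ∀ ψ : ℝ → ℝ, BLip ψ →
      S.E (fun ω => max (ψ (Y ω) - S.E (fun ω' => ψ (Y ω'))) 0) = 0 := by
    intro ψ hψ
    have hψc : BLip (fun y => ψ y - S.E (fun ω' => ψ (Y ω'))) :=
      blip_sub_const ψ hψ _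
    have hc0 : S.E (fun ω => ψ (Y ω) - S.E (fun ω' => ψ (Y ω'))) = 0 := by
      have e : (fun ω => ψ (Y ω) - S.E (fun ω' => ψ (Y ω')))
          = fun ω => ψ (Y ω) + (-(S.E (fun ω' => ψ (Y ω')))) := by
        funext ω; ring
      rw [e, sle_add_const S _ (hcompY ψ hψ)]
      ring
    exact posPart _ hψc hc0
  -- a.e. domination
  have aeLe : ∀ ψ : ℝ → ℝ, BLip ψ → ∀ P ∈ Ps,
      ∀ᵐ y ∂P, ψ y ≤ S.E (fun ω => ψ (Y ω)) := by
    intro ψ hψ P hP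
    haveI := hprob P hP
    have hψ'b : BLip (fun y => max (ψ y - S.E (fun ω => ψ (Y ω))) 0) :=
      blip_pos_part _ (blip_sub_const ψ hψ _)
    have h0 : ∫ y, max (ψ y - S.E (fun ω => ψ (Y ω))) 0 ∂P ≤ 0 :=
      le_of_le_of_eq (hub _ hψ'b P hP) (excess ψ hψ)
    have hint : Integrable (fun y => max (ψ y - S.E (fun ω => ψ (Y ω))) 0) P :=
      integrable_of_blip _ hψ'b P
    have hnn : (0:ℝ → ℝ) ≤ fun y => max (ψ y - S.E (fun ω => ψ (Y ω))) 0 :=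
      fun y => le_max_right _ _
    have hz : ∫ y, max (ψ y - S.E (fun ω => ψ (Y ω))) 0 ∂P = 0 :=
      le_antisymm h0 (integral_nonneg hnn)
    have hae0 := (integral_eq_zero_iff_of_nonneg hnn hint).1 hz
    filter_upwards [hae0] with y hy
    simp only [Pi.zero_apply] at hy
    have := le_max_left (ψ y - S.E (fun ω => ψ (Y ω))) 0
    rw [hy] at this
    linarith
  -- the set Γ
  set Γ : Set ℝ := {y | ∀ ψ : ℝ → ℝ, BLip ψ → ψ y ≤ S.E (fun ω => ψ (Y ω))} with hΓdef
  have hclosed : IsClosed Γ := by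
    have e : Γ = ⋂ (ψ : ℝ → ℝ) (_ : BLip ψ), {y | ψ y ≤ S.E (fun ω => ψ (Y ω))} := by
      ext y
      simp only [hΓdef, Set.mem_setOf_eq, Set.mem_iInter]
    rw [e]
    apply isClosed_iInter; intro ψ; apply isClosed_iInter; intro hψ
    exact isClosed_le (blip_continuous ψ hψ) continuous_const
  have hnull : ∀ P ∈ Ps, P Γᶜ = 0 := by
    intro P hP
    set U : Set (Set ℝ) :=
      {A | ∃ ψ : ℝ → ℝ, BLip ψ ∧ A = {y | S.E (fun ω => ψ (Y ω)) < ψ y}} with hU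
    have hUopen : ∀ A ∈ U, IsOpen A := by
      rintro A ⟨ψ, hψ, rfl⟩
      exact isOpen_lt continuous_const (blip_continuous ψ hψ)
    obtain ⟨T, hTc, hTU, hTeq⟩ := TopologicalSpace.isOpen_sUnion_countable U hUopen
    have hcompl : Γᶜ = ⋃₀ U := by
      ext y
      simp only [Set.mem_compl_iff, hΓdef, Set.mem_setOf_eq, Set.mem_sUnion, hU]
      constructor
      · intro h; push_neg at h; obtain ⟨ψ, hψ, hlt⟩ := h
        exact ⟨_, ⟨ψ, hψ, rfl⟩, hlt⟩
      · rintro ⟨A, ⟨ψ, hψ, rfl⟩, hy⟩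
        intro hall; exact absurd (hall ψ hψ) (not_le.2 hy)
    rw [hcompl, ← hTeq, Set.sUnion_eq_biUnion]
    apply (measure_biUnion_null_iff hTc).2
    intro A hA
    obtain ⟨ψ, hψ, rfl⟩ := hTU hA
    have hae := aeLe ψ hψ P hP
    rw [ae_iff] at hae
    simpa only [not_le] using hae
  have attain : ∀ ψ : ℝ → ℝ, BLip ψ → ∃ y ∈ Γ, ψ y = S.E (fun ω => ψ (Y ω)) := by
    intro ψ hψ
    obtain ⟨P, hP, hPint⟩ := hatt ψ hψ
    haveI := hprob P hP
    have hi : Integrable ψ P := integrable_of_blip ψ hψ P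
    have hae := aeLe ψ hψ P hP
    set c := S.E (fun ω => ψ (Y ω)) with hc
    have hsub : ∫ y, (c - ψ y) ∂P = 0 := by
      rw [integral_sub (integrable_const c) hi, integral_const, probReal_univ]
      simp [hPint]
    have hnn : 0 ≤ᵐ[P] fun y => c - ψ y := by
      filter_upwards [hae] with y hy
      simp only [Pi.zero_apply]; linarith
    have hint2 : Integrable (fun y => c - ψ y) P := (integrable_const c).sub hi
    have hae2 := (integral_eq_zero_iff_of_nonneg_ae hnn hint2).1 hsub
    have hnullψ : P {y | ψ y = c}ᶜ = 0 := by
      have hsubset : {y | ψ y = c}ᶜ ⊆ {y | ¬ ((fun y => c - ψ y) y = (0:ℝ → ℝ) y)} := by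
        intro y hy
        simp only [Set.mem_compl_iff, Set.mem_setOf_eq] at hy ⊢
        simp only [Pi.zero_apply]
        intro h; apply hy; linarith
      apply measure_mono_null hsubset
      exact ae_iff.1 hae2
    have hΓnull : P Γᶜ = 0 := hnull P hP
    have hBne : P ({y | ψ y = c} ∩ Γ) ≠ 0 := by
      intro h0
      have h1 : P (({y | ψ y = c} ∩ Γ)ᶜ) = 0 := by
        rw [Set.compl_inter]
        exact measure_union_null hnullψ hΓnull
      have hle2 := measure_union_le (μ := P) ({y | ψ y = c} ∩ Γ) (({y | ψ y = c} ∩ Γ)ᶜ)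
      rw [Set.union_compl_self, h0, h1, measure_univ] at hle2
      simp at hle2
    obtain ⟨y, hy⟩ := nonempty_of_measure_ne_zero hBne
    exact ⟨y, hy.2, hy.1⟩
  have hblip0 : BLip (fun _ : ℝ => (0:ℝ)) := ⟨⟨0, LipschitzWith.const 0⟩, 0, by simp⟩
  obtain ⟨y₁, hy₁Γ, _⟩ := attain (fun _ => 0) hblip0
  refine ⟨Γ, hclosed, ⟨y₁, hy₁Γ⟩, ?_⟩
  intro ψ hψ
  obtain ⟨y₀, hy₀Γ, hy₀⟩ := attain ψ hψ
  have hgr : IsGreatest (ψ '' Γ) (S.E (fun ω => ψ (Y ω))) := by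
    constructor
    · exact ⟨y₀, hy₀Γ, hy₀⟩
    · rintro v ⟨y, hyΓ, rfl⟩
      exact hyΓ ψ hψ
  exact hgr.csSup_eq.symm
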